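/- Fix an integer s ≥ 1 and p ∈ [0,1]. Let X be an ℕ-valued random variable and let (Z, Y) be a pair of ℕ-valued random variables on some probability space with Z − Y ≥ 0 almost surely. Assume E[C(X, s)] < ∞ and E[C(Z, s)] < ∞, and that E[g(X)] ≥ p·E[g(Z − Y)] + (1−p)·g(0) for every s-convex g : ℕ → ℝ whose relevant expectations are finite. Then for all a, b ∈ [0,∞): Σ_{k=0}^∞ | a·E[C(X − k − 1, s−1)] − b·E[C(Z − k − 1, s−1)] | ≤ a·E[C(X, s)] − 2ap·E[C(Z − Y, s)] + (ap + |ap − b|)·E[C(Z, s)], where X − k − 1 and Z − k − 1 are computed in ℤ. -/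

import Mathlib

open MeasureTheory ProbabilityTheory

/-- Forward difference operator on sequences. -/
noncomputable def ndiff (g : ℕ → ℝ) : ℕ → ℝ := fun j => g (j + 1) - g j

/-- Generalized binomial coefficient `C(m, t)` for `m : ℤ`, `t : ℕ`:
`m(m-1)⋯(m-t+1)/t!` when `0 ≤ t ≤ m`, and `0` otherwise. -/
noncomputable def genBinom (m : ℤ) (t : ℕ) : ℝ :=
  if (t : ℤ) ≤ m then (m.toNat.choose t : ℝ) else 0

lemma genBinom_nonneg (m : ℤ) (t : ℕ) : 0 ≤ genBinom m t := by
  unfold genBinom; split <;> positivity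

lemma genBinom_of_nonneg {m : ℤ} (hm : 0 ≤ m) (t : ℕ) :
    genBinom m t = (m.toNat.choose t : ℝ) := by
  unfold genBinom; split
  · rfl
  · rename_i h
    rw [Nat.choose_eq_zero_of_lt (by omega)]
    simp

lemma genBinom_of_neg {m : ℤ} (hm : m < 0) (t : ℕ) : genBinom m t = 0 := by
  unfold genBinom; rw [if_neg (by omega)]

lemma genBinom_pascal (m : ℤ) (t : ℕ) :
    genBinom (m + 1) (t + 1) = genBinom m (t + 1) + genBinom m t := by
  rcases lt_trichotomy m (t : ℤ) with h | h | h
  · unfold genBinom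
    rw [if_neg (by push_cast; omega), if_neg (by push_cast; omega), if_neg (by push_cast; omega)]
    ring
  · subst h
    have e1 : genBinom ((t:ℤ) + 1) (t + 1) = 1 := by
      rw [genBinom_of_nonneg (by positivity)]
      have : ((t:ℤ) + 1).toNat = t + 1 := by omega
      rw [this, Nat.choose_self]; norm_num
    have e2 : genBinom (t:ℤ) (t + 1) = 0 := by
      unfold genBinom; rw [if_neg (by omega)]
    have e3 : genBinom (t:ℤ) t = 1 := by
      rw [genBinom_of_nonneg (by positivity)]
      have : ((t:ℤ)).toNat = t := by omega
      rw [this, Nat.choose_self]; norm_num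
    rw [e1, e2, e3]; ring
  · have h0 : (0:ℤ) ≤ m := le_trans (by positivity) h.le
    rw [genBinom_of_nonneg (by omega), genBinom_of_nonneg h0, genBinom_of_nonneg h0]
    have h1 : (m+1).toNat = m.toNat + 1 := by omega
    rw [h1, Nat.choose_succ_succ]
    push_cast; ring

lemma genBinom_mono {m m' : ℤ} (h : m ≤ m') (t : ℕ) : genBinom m t ≤ genBinom m' t := by
  by_cases hm : (t : ℤ) ≤ m
  · rw [genBinom_of_nonneg (le_trans (by positivity) hm) t,
      genBinom_of_nonneg (le_trans (le_trans (by positivity) hm) h) t]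
    exact_mod_cast Nat.choose_le_choose t (by omega)
  · unfold genBinom; rw [if_neg hm]
    split <;> positivity

lemma sum_choose (r n : ℕ) : ∑ j ∈ Finset.range n, (j.choose r) = n.choose (r + 1) := by
  induction n with
  | zero => simp
  | succ n ih =>
    rw [Finset.sum_range_succ, ih, Nat.choose_succ_succ]
    simp only [Nat.succ_eq_add_one]
    omega

lemma gk_vanish {n k : ℕ} (h : n ≤ k) (t : ℕ) : genBinom ((n : ℤ) - k - 1) t = 0 :=
  genBinom_of_neg (by omega) t

lemma gk_summable (n t : ℕ) : Summable (fun k : ℕ => genBinom ((n : ℤ) - k - 1) t) :=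
  summable_of_ne_finset_zero (s := Finset.range n)
    (fun k hk => gk_vanish (by simpa using hk) t)

lemma gk_tsum (n s : ℕ) (hs : 1 ≤ s) :
    ∑' k : ℕ, genBinom ((n : ℤ) - k - 1) (s - 1) = (n.choose s : ℝ) := by
  rw [tsum_eq_sum (s := Finset.range n) (fun k hk => gk_vanish (by simpa using hk) _)]
  have h1 : ∀ k ∈ Finset.range n,
      genBinom ((n : ℤ) - k - 1) (s - 1) = (((n - 1 - k).choose (s - 1) : ℕ) : ℝ) := by
    intro k hk
    have hk' : k < n := Finset.mem_range.mp hk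
    rw [genBinom_of_nonneg (by omega)]
    have : ((n : ℤ) - k - 1).toNat = n - 1 - k := by omega
    rw [this]
  rw [Finset.sum_congr rfl h1, ← Nat.cast_sum,
    Finset.sum_range_reflect (fun j => j.choose (s - 1)) n, sum_choose]
  congr 2
  omega

lemma gk_le (n k s : ℕ) (hs : 1 ≤ s) :
    genBinom ((n : ℤ) - k - 1) (s - 1) ≤ (n.choose s : ℝ) := by
  calc genBinom ((n : ℤ) - k - 1) (s - 1) ≤ genBinom ((n : ℤ) - 1) (s - 1) :=
        genBinom_mono (by omega) _
    _ ≤ _ := by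
      rcases n with _ | m
      · rw [genBinom_of_neg (by norm_num)]; positivity
      · rw [genBinom_of_nonneg (by push_cast; omega)]
        have h2 : (((m + 1 : ℕ) : ℤ) - 1).toNat = m := by omega
        rw [h2]
        have h3 : m.choose (s - 1) ≤ (m + 1).choose s := by
          have hs' : s - 1 + 1 = s := by omega
          calc m.choose (s - 1) ≤ (m + 1).choose (s - 1 + 1) := by
                rw [Nat.choose_succ_succ]; omega
            _ = (m + 1).choose s := by rw [hs']
        exact_mod_cast h3

lemma ndiff_genBinom (c : ℤ) (t : ℕ) :
    ndiff (fun n : ℕ => genBinom ((n : ℤ) - c) (t + 1)) =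
      fun n : ℕ => genBinom ((n : ℤ) - c) t := by
  funext n
  have h := genBinom_pascal ((n : ℤ) - c) t
  simp only [ndiff]
  push_cast
  rw [show ((n : ℤ) + 1 - c) = ((n : ℤ) - c) + 1 by ring]
  linarith

lemma sconvex (c : ℤ) (t : ℕ) :
    ∀ j, 0 ≤ ndiff^[t + 1] (fun n : ℕ => genBinom ((n : ℤ) - c) t) j := by
  induction t with
  | zero =>
    intro j
    show 0 ≤ ndiff (fun n : ℕ => genBinom ((n : ℤ) - c) 0) j
    simp only [ndiff]
    have h := genBinom_mono (m := (j : ℤ) - c) (m' := (j : ℤ) + 1 - c) (by omega) 0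
    push_cast
    linarith
  | succ t ih =>
    intro j
    rw [Function.iterate_succ_apply, ndiff_genBinom]
    exact ih j

lemma key_sum {Ω : Type*} [MeasurableSpace Ω] (P : Measure Ω)
    (s : ℕ) (hs : 1 ≤ s) (W : Ω → ℕ) (hW : Measurable W)
    (hint : Integrable (fun ω => (Nat.choose (W ω) s : ℝ)) P) :
    Summable (fun k : ℕ => ∫ ω, genBinom ((W ω : ℤ) - k - 1) (s - 1) ∂P) ∧
      ∑' k : ℕ, ∫ ω, genBinom ((W ω : ℤ) - k - 1) (s - 1) ∂P
        = ∫ ω, (Nat.choose (W ω) s : ℝ) ∂P := by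
  have meas : ∀ k : ℕ, Measurable (fun ω => genBinom ((W ω : ℤ) - k - 1) (s - 1)) :=
    fun k => (measurable_from_top (f := fun n : ℕ => genBinom ((n : ℤ) - k - 1) (s - 1))).comp hW
  have intk : ∀ k : ℕ, Integrable (fun ω => genBinom ((W ω : ℤ) - k - 1) (s - 1)) P := by
    intro k
    refine hint.mono (meas k).aestronglyMeasurable (Filter.Eventually.of_forall fun ω => ?_)
    rw [Real.norm_eq_abs, Real.norm_eq_abs, abs_of_nonneg (genBinom_nonneg _ _),
      abs_of_nonneg (by positivity)]
    exact gk_le _ _ _ hs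
  have hpt : ∀ n : ℕ, (∑' k : ℕ, (‖genBinom ((n : ℤ) - k - 1) (s - 1)‖₊ : ENNReal))
      = ENNReal.ofReal (n.choose s : ℝ) := by
    intro n
    rw [tsum_congr (fun (k : ℕ) => show
        (‖genBinom ((n : ℤ) - k - 1) (s - 1)‖₊ : ENNReal) = ENNReal.ofReal (genBinom ((n : ℤ) - k - 1) (s - 1))
        from Real.enorm_eq_ofReal (genBinom_nonneg _ _)),
      ← ENNReal.ofReal_tsum_of_nonneg (fun k => genBinom_nonneg _ _) (gk_summable n _),
      gk_tsum n s hs]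
  have hfin : (∑' k : ℕ, ∫⁻ ω, ‖genBinom ((W ω : ℤ) - k - 1) (s - 1)‖₊ ∂P) ≠ ⊤ := by
    rw [← lintegral_tsum (fun k => (meas k).nnnorm.coe_nnreal_ennreal.aemeasurable)]
    have h2 : ∫⁻ ω, ∑' k : ℕ, (‖genBinom ((W ω : ℤ) - k - 1) (s - 1)‖₊ : ENNReal) ∂P
        = ∫⁻ ω, ‖(Nat.choose (W ω) s : ℝ)‖₊ ∂P := by
      refine lintegral_congr fun ω => ?_
      rw [hpt (W ω)]; exact (Real.enorm_eq_ofReal (by positivity)).symm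
    rw [h2]
    exact hint.2.ne
  constructor
  · apply summable_of_sum_range_le (c := ∫ ω, (Nat.choose (W ω) s : ℝ) ∂P)
      (fun k => integral_nonneg fun ω => genBinom_nonneg _ _)
    intro K
    rw [← integral_finset_sum _ (fun k _ => intk k)]
    refine integral_mono (integrable_finset_sum _ fun k _ => intk k) hint fun ω => ?_
    calc ∑ k ∈ Finset.range K, genBinom ((W ω : ℤ) - k - 1) (s - 1)
        ≤ ∑' k : ℕ, genBinom ((W ω : ℤ) - k - 1) (s - 1) :=
          Summable.sum_le_tsum _ (fun k _ => genBinom_nonneg _ _) (gk_summable _ _)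
      _ = _ := gk_tsum _ s hs
  · rw [← integral_tsum (fun k => (meas k).aestronglyMeasurable) hfin]
    refine integral_congr_ae (Filter.Eventually.of_forall fun ω => ?_)
    exact gk_tsum (W ω) s hs

lemma meask {Ω : Type*} [MeasurableSpace Ω] {W : Ω → ℕ} (hW : Measurable W) (k t : ℕ) :
    Measurable (fun ω => genBinom ((W ω : ℤ) - k - 1) t) :=
  (measurable_from_top (f := fun n : ℕ => genBinom ((n : ℤ) - k - 1) t)).comp hW

lemma intkk {Ω : Type*} [MeasurableSpace Ω] {P : Measure Ω} {s : ℕ} (hs : 1 ≤ s)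
    {W : Ω → ℕ} (hW : Measurable W)
    (hint : Integrable (fun ω => (Nat.choose (W ω) s : ℝ)) P) (k : ℕ) :
    Integrable (fun ω => genBinom ((W ω : ℤ) - k - 1) (s - 1)) P := by
  refine hint.mono (meask hW k (s - 1)).aestronglyMeasurable
    (Filter.Eventually.of_forall fun ω => ?_)
  rw [Real.norm_eq_abs, Real.norm_eq_abs, abs_of_nonneg (genBinom_nonneg _ _),
    abs_of_nonneg (by positivity)]
  exact gk_le _ _ _ hs

/-- Lemma 1 of Daly, Lefèvre, Utev: an abstract metrics–ordering relationship
under the `s`-convex stochastic ordering `X ⪰_{s-cx} v_p (Z - Y)`. -/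
theorem stmt3
    {Ω₁ Ω₂ : Type*} [MeasurableSpace Ω₁] [MeasurableSpace Ω₂]
    (P₁ : Measure Ω₁) [IsProbabilityMeasure P₁]
    (P₂ : Measure Ω₂) [IsProbabilityMeasure P₂]
    (s : ℕ) (hs : 1 ≤ s) (p : ℝ) (hp0 : 0 ≤ p) (hp1 : p ≤ 1)
    (X : Ω₁ → ℕ) (hX : Measurable X)
    (Z Y : Ω₂ → ℕ) (hZ : Measurable Z) (hY : Measurable Y)
    (hYZ : ∀ᵐ ω ∂P₂, Y ω ≤ Z ω)
    (hintX : Integrable (fun ω => (Nat.choose (X ω) s : ℝ)) P₁)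
    (hintZ : Integrable (fun ω => (Nat.choose (Z ω) s : ℝ)) P₂)
    (hord : ∀ g : ℕ → ℝ, (∀ j, 0 ≤ ndiff^[s] g j) →
      Integrable (fun ω => g (X ω)) P₁ →
      Integrable (fun ω => g (Z ω - Y ω)) P₂ →
      p * (∫ ω, g (Z ω - Y ω) ∂P₂) + (1 - p) * g 0 ≤ ∫ ω, g (X ω) ∂P₁)
    (a b : ℝ) (ha : 0 ≤ a) (hb : 0 ≤ b) :
    (∑' k : ℕ, |a * (∫ ω, genBinom ((X ω : ℤ) - k - 1) (s - 1) ∂P₁)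
        - b * ∫ ω, genBinom ((Z ω : ℤ) - k - 1) (s - 1) ∂P₂|) ≤
      a * (∫ ω, (Nat.choose (X ω) s : ℝ) ∂P₁)
        - 2 * a * p * (∫ ω, (Nat.choose (Z ω - Y ω) s : ℝ) ∂P₂)
        + (a * p + |a * p - b|) * ∫ ω, (Nat.choose (Z ω) s : ℝ) ∂P₂ := by
  set A : ℕ → ℝ := fun k => ∫ ω, genBinom ((X ω : ℤ) - k - 1) (s - 1) ∂P₁ with hA
  set B : ℕ → ℝ := fun k => ∫ ω, genBinom ((Z ω : ℤ) - k - 1) (s - 1) ∂P₂ with hB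
  set C : ℕ → ℝ := fun k => ∫ ω, genBinom (((Z ω - Y ω : ℕ) : ℤ) - k - 1) (s - 1) ∂P₂ with hC
  -- integrability of choose (Z - Y) s
  have hintZY : Integrable (fun ω => (Nat.choose (Z ω - Y ω) s : ℝ)) P₂ := by
    refine hintZ.mono ((measurable_from_top (f := fun n : ℕ => (Nat.choose n s : ℝ))).comp
      (hZ.sub hY)).aestronglyMeasurable (Filter.Eventually.of_forall fun ω => ?_)
    rw [Real.norm_eq_abs, Real.norm_eq_abs, abs_of_nonneg (by positivity),
      abs_of_nonneg (by positivity)]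
    exact_mod_cast Nat.choose_le_choose s (Nat.sub_le _ _)
  obtain ⟨SA, TA⟩ := key_sum P₁ s hs X hX hintX
  obtain ⟨SB, TB⟩ := key_sum P₂ s hs Z hZ hintZ
  obtain ⟨SC, TC⟩ := key_sum P₂ s hs (fun ω => Z ω - Y ω) (hZ.sub hY) hintZY
  -- ordering: p * C k ≤ A k
  have hAC : ∀ k, p * C k ≤ A k := by
    intro k
    have hconv : ∀ j, 0 ≤ ndiff^[s] (fun n : ℕ => genBinom ((n : ℤ) - k - 1) (s - 1)) j := by
      have h := sconvex ((k : ℤ) + 1) (s - 1)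
      have hs' : s - 1 + 1 = s := by omega
      rw [hs'] at h
      simpa [sub_sub] using h
    have h := hord (fun n : ℕ => genBinom ((n : ℤ) - k - 1) (s - 1)) hconv
      (intkk hs hX hintX k) (intkk hs (hZ.sub hY) hintZY k)
    have h0 : genBinom (((0 : ℕ) : ℤ) - k - 1) (s - 1) = 0 :=
      genBinom_of_neg (by omega) _
    rw [h0] at h
    have h' : p * C k + (1 - p) * 0 ≤ A k := h
    linarith
  -- monotonicity: C k ≤ B k
  have hCB : ∀ k, C k ≤ B k := by
    intro k
    refine integral_mono (intkk hs (hZ.sub hY) hintZY k) (intkk hs hZ hintZ k) fun ω => ?_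
    exact genBinom_mono (by omega) _
  have hB0 : ∀ k, 0 ≤ B k := fun k => integral_nonneg fun ω => genBinom_nonneg _ _
  -- pointwise bound
  have hbd : ∀ k, |a * A k - b * B k| ≤
      a * (A k - p * C k) + a * p * (B k - C k) + |a * p - b| * B k := by
    intro k
    have e : a * A k - b * B k
        = a * (A k - p * C k) + a * p * (C k - B k) + (a * p - b) * B k := by ring
    calc |a * A k - b * B k|
        ≤ |a * (A k - p * C k)| + |a * p * (C k - B k)| + |(a * p - b) * B k| := by
          rw [e]; exact abs_add_three _ _ _
      _ = a * (A k - p * C k) + a * p * (B k - C k) + |a * p - b| * B k := by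
          rw [abs_of_nonneg (mul_nonneg ha (sub_nonneg.2 (hAC k))),
            abs_mul (a * p), abs_of_nonneg (mul_nonneg ha hp0), abs_sub_comm,
            abs_of_nonneg (sub_nonneg.2 (hCB k)),
            abs_mul, abs_of_nonneg (hB0 k)]
  -- summability of the bound
  have Sbd : Summable (fun k => a * (A k - p * C k) + a * p * (B k - C k) + |a * p - b| * B k) :=
    (((SA.sub (SC.mul_left p)).mul_left a).add ((SB.sub SC).mul_left (a * p))).add
      (SB.mul_left |a * p - b|)
  have Slhs : Summable (fun k => |a * A k - b * B k|) :=
    Summable.of_nonneg_of_le (fun k => abs_nonneg _) hbd Sbd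
  calc (∑' k, |a * A k - b * B k|)
      ≤ ∑' k, (a * (A k - p * C k) + a * p * (B k - C k) + |a * p - b| * B k) :=
        Summable.tsum_le_tsum hbd Slhs Sbd
    _ = a * ((∑' k, A k) - p * ∑' k, C k) + a * p * ((∑' k, B k) - ∑' k, C k)
        + |a * p - b| * ∑' k, B k := by
        rw [Summable.tsum_add (((SA.sub (SC.mul_left p)).mul_left a).add ((SB.sub SC).mul_left (a * p)))
            (SB.mul_left |a * p - b|),
          Summable.tsum_add ((SA.sub (SC.mul_left p)).mul_left a) ((SB.sub SC).mul_left (a * p)),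
          tsum_mul_left, tsum_mul_left, tsum_mul_left,
          Summable.tsum_sub SA (SC.mul_left p), Summable.tsum_sub SB SC, tsum_mul_left]
    _ = _ := by
        rw [TA, TB, TC]
        ring
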